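/- For every integer n ≥ 3, there exists a real number x with 1 < x < 5/4 such that g_n(x) = 0. -/
import Mathlib


noncomputable def g (n x : ℝ) : ℝ :=
  207936*(2*n+1) - 102144*(n+1)*(2*n+5)*x
  + 16*(1568*n^3+64640*n^2-41122*n-16577)*x^2
  - 64*(n+1)*(6206*n^2+3103*n-24590)*x^3
  + 16*(2576*n^4+61176*n^3-136972*n^2+29870*n-29251)*x^4
  - 128*(n-2)*(n+1)*(2528*n^2+1264*n-7475)*x^5
  + 4*(n-2)*(6920*n^4+133792*n^3-248456*n^2+25437*n-155306)*x^6
  - 128*(n-2)^2*(n+1)*(1118*n^2+559*n-2207)*x^7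
  + 8*(n-2)^2*(1216*n^4+21996*n^3-35132*n^2+3055*n-34571)*x^8
  - 16*(n-2)^3*(n+1)*(2318*n^2+1159*n-2324)*x^9
  + 2*(n-2)^3*(944*n^4+17808*n^3-25762*n^2+5873*n-31006)*x^10
  - 32*(n-2)^4*(n+1)*(176*n^2+88*n-5)*x^11
  + (n-2)^4*(192*n^4+4328*n^3-6086*n^2+3419*n-7229)*x^12
  - 8*(n-2)^5*(n+1)*(58*n^2+29*n+56)*x^13
  + 2*(n-2)^5*(4*n^4+144*n^3-215*n^2+229*n-191)*x^14
  - 8*(n-2)^6*(n+1)*(2*n^2+n+4)*x^15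
  + (n-2)^6*(4*n-1)*(2*n^2-3*n+5)*x^16

lemma g_at_one (n : ℝ) (hn : 3 ≤ n) : g n 1 < 0 := by
  obtain ⟨m, hm, rfl⟩ : ∃ m : ℝ, 0 ≤ m ∧ n = m + 3 := ⟨n - 3, by linarith, by ring⟩
  unfold g
  nlinarith [pow_nonneg hm 2, pow_nonneg hm 3, pow_nonneg hm 4, pow_nonneg hm 5,
    pow_nonneg hm 6, pow_nonneg hm 7, pow_nonneg hm 8, hm]

lemma g_at_qq (n : ℝ) (hn : 3 ≤ n) : 0 < g n (5/4) := by
  obtain ⟨m, hm, rfl⟩ : ∃ m : ℝ, 0 ≤ m ∧ n = m + 3 := ⟨n - 3, by linarith, by ring⟩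
  unfold g
  nlinarith [pow_nonneg hm 2, pow_nonneg hm 3, pow_nonneg hm 4, pow_nonneg hm 5,
    pow_nonneg hm 6, pow_nonneg hm 7, pow_nonneg hm 8, pow_nonneg hm 9, hm]

theorem stmt_6 (n : ℤ) (hn : 3 ≤ n) :
    ∃ x : ℝ, 1 < x ∧ x < 5/4 ∧ g (n : ℝ) x = 0 := by
  have hn' : (3:ℝ) ≤ (n:ℝ) := by exact_mod_cast hn
  have hc : ContinuousOn (g (n:ℝ)) (Set.Icc 1 (5/4)) := by
    unfold g; fun_prop
  have h1 : g (n:ℝ) 1 < 0 := g_at_one _ hn'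
  have h2 : 0 < g (n:ℝ) (5/4) := g_at_qq _ hn'
  have := intermediate_value_Ioo (by norm_num : (1:ℝ) ≤ 5/4) hc
  have h0 : (0:ℝ) ∈ Set.Ioo (g (n:ℝ) 1) (g (n:ℝ) (5/4)) := ⟨h1, h2⟩
  obtain ⟨x, hx, hgx⟩ := this h0
  exact ⟨x, hx.1, hx.2, hgx⟩
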